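/- The clique number of G(ℚⁿ, q) equals 1 + max{k : Sₖ embeds into q}, where Sₖ embeds into q means there exists a rational quadratic form r on n−k variables with Sₖ(x) + r(y) rationally equivalent to q. -/

import Mathlib

/-- The unit-distance graph of a rational quadratic form `q` on `ℚⁿ`:
vertices are `ℚⁿ` and `x ~ y` iff `q (x - y) = 1`. -/
def distGraph {n : ℕ} (q : QuadraticForm ℚ (Fin n → ℚ)) : SimpleGraph (Fin n → ℚ) where
  Adj x y := q (x - y) = 1
  symm := ⟨fun x y h => by (try simp only [] at h ⊢); rwa [QuadraticMap.map_sub] at h⟩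
  loopless := ⟨fun x h => by simp [sub_self] at h⟩

/-- The quadratic form `Sₙ(x) = ∑_{1 ≤ i ≤ j ≤ n} xᵢ xⱼ` as a function. -/
def Sfun (n : ℕ) (x : Fin n → ℚ) : ℚ := ∑ i, ∑ j ∈ Finset.Ici i, x i * x j

/-- `Sₖ` embeds into `q`: there is a rational quadratic form `r` on `n - k` variables
with `Sₖ ⊕ r` rationally equivalent to `q`. -/
def SEmbeds {n : ℕ} (k : ℕ) (q : QuadraticForm ℚ (Fin n → ℚ)) : Prop :=
  ∃ (r : QuadraticForm ℚ (Fin (n - k) → ℚ))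
    (T : (Fin n → ℚ) ≃ₗ[ℚ] ((Fin k → ℚ) × (Fin (n - k) → ℚ))),
    ∀ v : Fin n → ℚ, q v = Sfun k (T v).1 + r (T v).2

open Finset in
lemma Sfun_eq (n : ℕ) (x : Fin n → ℚ) :
    Sfun n x = ((∑ i, x i) ^ 2 + ∑ i, (x i) ^ 2) / 2 := by
  classical
  have hsplit : ∀ i : Fin n, ∑ j, x i * x j
      = ∑ j ∈ Ici i, x i * x j + ∑ j ∈ Iio i, x i * x j := by
    intro i
    have h1 : (univ.filter (fun j => i ≤ j)) = Ici i := by ext j; simp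
    have h2 : (univ.filter (fun j => ¬ i ≤ j)) = Iio i := by ext j; simp [not_le]
    rw [← h1, ← h2, Finset.sum_filter_add_sum_filter_not]
  have h1 : (∑ i, x i) ^ 2 = Sfun n x + ∑ i, ∑ j ∈ Iio i, x i * x j := by
    rw [sq, Finset.sum_mul_sum, Sfun, ← Finset.sum_add_distrib]
    exact Finset.sum_congr rfl fun i _ => hsplit i
  have h2 : ∑ i, ∑ j ∈ Iio i, x i * x j = ∑ j, ∑ i ∈ Ioi j, x i * x j :=
    Finset.sum_comm' (by simp)
  have h3 : Sfun n x = ∑ i, (x i) ^ 2 + ∑ i, ∑ j ∈ Ioi i, x i * x j := by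
    rw [Sfun, ← Finset.sum_add_distrib]
    refine Finset.sum_congr rfl fun i _ => ?_
    rw [Finset.Ici_eq_cons_Ioi, Finset.sum_cons, sq]
  have h4 : ∑ j, ∑ i ∈ Ioi j, x i * x j = ∑ i, ∑ j ∈ Ioi i, x i * x j :=
    Finset.sum_congr rfl fun i _ => Finset.sum_congr rfl fun j _ => mul_comm _ _
  rw [h2, h4] at h1
  linarith

lemma Sfun_pos {n : ℕ} {x : Fin n → ℚ} (hx : x ≠ 0) : 0 < Sfun n x := by
  rw [Sfun_eq]
  have h1 : 0 < ∑ i, (x i) ^ 2 := by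
    obtain ⟨i, hi⟩ : ∃ i, x i ≠ 0 := by
      by_contra h; push_neg at h; exact hx (funext h)
    exact Finset.sum_pos' (fun j _ => sq_nonneg _)
      ⟨i, Finset.mem_univ i, by positivity⟩
  positivity

lemma Sfun_single (k : ℕ) (i : Fin k) : Sfun k (Pi.single i (1:ℚ) : Fin k → ℚ) = 1 := by
  classical
  set ei : Fin k → ℚ := Pi.single i 1 with hei
  rw [Sfun_eq]
  have h1 : ∑ j, ei j = 1 := by simp [hei]
  have h2 : ∑ j, (ei j) ^ 2 = 1 := by
    have key : ∀ a : Fin k, (ei a) ^ 2 = if a = i then 1 else 0 := by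
      intro a
      rw [hei]
      rcases eq_or_ne a i with rfl | hi
      · simp
      · simp [Pi.single_apply, hi]
    rw [Finset.sum_congr rfl fun a _ => key a]
    simp
  rw [h1, h2]; norm_num

lemma Sfun_single_sub {k : ℕ} {i j : Fin k} (h : i ≠ j) :
    Sfun k ((Pi.single i (1:ℚ) : Fin k → ℚ) - Pi.single j 1) = 1 := by
  classical
  set f : Fin k → ℚ := (Pi.single i (1:ℚ) : Fin k → ℚ) - Pi.single j 1 with hf
  rw [Sfun_eq]
  have hfa : ∀ a, f a = (if a = i then 1 else 0) - (if a = j then 1 else 0) := by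
    intro a
    simp [hf, Pi.single_apply]
  have h1 : ∑ a, f a = 0 := by
    rw [Finset.sum_congr rfl fun a _ => hfa a, Finset.sum_sub_distrib]
    simp
  have h2 : ∑ a, (f a) ^ 2 = 2 := by
    have key : ∀ a : Fin k, (f a) ^ 2
        = (if a = i then 1 else 0) + (if a = j then 1 else 0) := by
      intro a
      rw [hfa a]
      rcases eq_or_ne a i with rfl | hi <;> rcases eq_or_ne a j with rfl | hj <;>
        simp_all
    rw [Finset.sum_congr rfl fun a _ => key a, Finset.sum_add_distrib]
    simp; norm_num
  rw [h1, h2]; norm_num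

lemma clique_of_embeds {n : ℕ} {q : QuadraticForm ℚ (Fin n → ℚ)} {k : ℕ}
    (h : SEmbeds k q) : ∃ s, (distGraph q).IsNClique (k + 1) s := by
  classical
  obtain ⟨r, T, hT⟩ := h
  set w : Fin k → (Fin n → ℚ) := fun i => T.symm ((Pi.single i (1:ℚ) : Fin k → ℚ), 0) with hw
  have hTw : ∀ i, T (w i) = (Pi.single i 1, 0) := fun i => T.apply_symm_apply _
  have hq1 : ∀ i, q (w i) = 1 := by
    intro i
    rw [hT, hTw]
    simp [Sfun_single]
  have hq2 : ∀ i j, i ≠ j → q (w i - w j) = 1 := by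
    intro i j hij
    have hTs : T (w i - w j) = (Pi.single i 1 - Pi.single j 1, 0) := by
      rw [map_sub, hTw, hTw, Prod.mk_sub_mk, sub_zero]
    rw [hT, hTs]
    simp [Sfun_single_sub hij]
  have hwinj : Function.Injective w := by
    intro i j hij
    have h2 : ((Pi.single i 1 : Fin k → ℚ), (0 : Fin (n-k) → ℚ)) = ((Pi.single j 1 : Fin k → ℚ), 0) := by
      rw [← hTw i, ← hTw j, hij]
    have h3 : (Pi.single i 1 : Fin k → ℚ) = Pi.single j 1 := congrArg Prod.fst h2
    by_contra hne
    have := congrFun h3 i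
    simp [Pi.single_apply, hne] at this
  have hw0 : ∀ i, w i ≠ 0 := by
    intro i h0
    have := hq1 i
    rw [h0] at this
    simp at this
  refine ⟨insert 0 (Finset.image w Finset.univ), ?_, ?_⟩
  · intro a ha b hb hab
    simp only [Finset.coe_insert, Set.mem_insert_iff, Finset.coe_image,
      Set.mem_image, Finset.mem_coe, Finset.mem_univ, true_and,
      Set.mem_setOf_eq] at ha hb
    have goal0 : ∀ i, (distGraph q).Adj 0 (w i) := by
      intro i
      show q (0 - w i) = 1
      rw [zero_sub, QuadraticMap.map_neg]
      exact hq1 i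
    rcases ha with rfl | ⟨i, _, rfl⟩ <;> rcases hb with rfl | ⟨j, _, rfl⟩
    · exact absurd rfl hab
    · exact goal0 j
    · exact ((distGraph q).adj_symm (goal0 i))
    · have hij : i ≠ j := fun hc => hab (by rw [hc])
      exact hq2 i j hij
  · rw [Finset.card_insert_of_notMem, Finset.card_image_of_injective _ hwinj,
      Finset.card_univ, Fintype.card_fin]
    intro hmem
    obtain ⟨i, _, hi⟩ := Finset.mem_image.mp hmem
    exact hw0 i hi

lemma le_of_embeds {n : ℕ} {q : QuadraticForm ℚ (Fin n → ℚ)} {k : ℕ}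
    (h : SEmbeds k q) : k ≤ n := by
  obtain ⟨r, T, -⟩ := h
  have := T.finrank_eq
  rw [Module.finrank_fin_fun, Module.finrank_prod, Module.finrank_fin_fun,
    Module.finrank_fin_fun] at this
  omega

open QuadraticMap LinearMap in
lemma embeds_of_clique {n : ℕ} {q : QuadraticForm ℚ (Fin n → ℚ)} (hq : q.PosDef)
    {m : ℕ} {s : Finset (Fin n → ℚ)} (h : (distGraph q).IsNClique (m + 1) s) :
    SEmbeds m q := by
  classical
  obtain ⟨hcl, hcard⟩ := h
  have hne : s.Nonempty := Finset.card_pos.mp (by omega)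
  obtain ⟨x₀, hx₀⟩ := hne
  have hterase : (s.erase x₀).card = m := by
    rw [Finset.card_erase_of_mem hx₀, hcard]; omega
  let e : Fin m ≃ {x // x ∈ s.erase x₀} := ((s.erase x₀).equivFinOfCardEq hterase).symm
  set w : Fin m → (Fin n → ℚ) := fun i => (e i : Fin n → ℚ) - x₀ with hwdef
  have hmem : ∀ i, ((e i : Fin n → ℚ)) ∈ s := fun i => Finset.mem_of_mem_erase (e i).2
  have hnex : ∀ i, (e i : Fin n → ℚ) ≠ x₀ := fun i => Finset.ne_of_mem_erase (e i).2
  have hq1 : ∀ i, q (w i) = 1 := fun i => hcl (hmem i) hx₀ (hnex i)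
  have hq2 : ∀ i j, i ≠ j → q (w i - w j) = 1 := by
    intro i j hij
    have hne2 : (e i : Fin n → ℚ) ≠ (e j : Fin n → ℚ) :=
      fun hc => hij (e.injective (Subtype.ext hc))
    have hadj := hcl (hmem i) (hmem j) hne2
    have : w i - w j = (e i : Fin n → ℚ) - (e j : Fin n → ℚ) := by
      rw [hwdef]; ring
    rw [this]
    exact hadj
  have hpol : ∀ i j, i ≠ j → polar q (w i) (w j) = 1 := by
    intro i j hij
    have h1 : q (w i - w j) = q (w i) + q (w j) - polar q (w i) (w j) := by
      have hdef : polar q (w i) (-(w j))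
          = q (w i + -(w j)) - q (w i) - q (-(w j)) := rfl
      rw [polar_neg_right, QuadraticMap.map_neg, ← sub_eq_add_neg] at hdef
      linarith
    rw [hq1, hq1, hq2 i j hij] at h1
    linarith
  set B := QuadraticMap.associated (R := ℚ) q with hBdef
  have hBdiag : ∀ x, B x x = q x := fun x => QuadraticMap.associated_eq_self_apply ℚ q x
  have hBpolar : ∀ x y, 2 * B x y = polar q x y := by
    intro x y
    rw [hBdef, QuadraticMap.associated_apply]
    show 2 * ((⅟2 : ℚ) * (q (x + y) - q x - q y)) = polar q x y
    rw [invOf_eq_inv]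
    show 2 * ((2 : ℚ)⁻¹ * (q (x + y) - q x - q y)) = q (x + y) - q x - q y
    ring
  have hBoff : ∀ i j, i ≠ j → B (w i) (w j) = 1/2 := by
    intro i j hij
    have := hBpolar (w i) (w j)
    rw [hpol i j hij] at this
    linarith
  let L : (Fin m → ℚ) →ₗ[ℚ] (Fin n → ℚ) := Fintype.linearCombination ℚ w
  have hL : ∀ x, L x = ∑ i, x i • w i := fun x => Fintype.linearCombination_apply ℚ w x
  have key : ∀ x, q (L x) = Sfun m x := by
    intro x
    have h2 : ∀ i, B (w i) (L x) = ∑ j, x j * B (w i) (w j) := by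
      intro i
      rw [hL x, map_sum]
      exact Finset.sum_congr rfl fun j _ => by rw [_root_.map_smul, smul_eq_mul]
    have h1 : ∀ y, B (L x) y = ∑ i, x i * B (w i) y := by
      intro y
      rw [hL x, map_sum, LinearMap.sum_apply]
      refine Finset.sum_congr rfl fun i _ => ?_
      rw [_root_.map_smul, LinearMap.smul_apply, smul_eq_mul]
    have hexp : q (L x) = ∑ i, ∑ j, x i * x j * B (w i) (w j) := by
      rw [← hBdiag, h1 (L x), Finset.sum_congr rfl fun i _ => by rw [h2 i]]
      refine Finset.sum_congr rfl fun i _ => ?_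
      rw [Finset.mul_sum]
      exact Finset.sum_congr rfl fun j _ => by ring
    have hsplit : ∀ i j : Fin m, x i * x j * B (w i) (w j)
        = (1/2) * (x i * x j) + (if j = i then (1/2) * (x i * x j) else 0) := by
      intro i j
      rcases eq_or_ne j i with rfl | hij
      · rw [hBdiag, hq1]
        simp
        ring
      · rw [hBoff i j (fun hc => hij hc.symm)]
        simp [hij]
        ring
    have hss : ∀ i : Fin m, ∑ j, ((1/2) * (x i * x j)
        + (if j = i then (1/2) * (x i * x j) else 0))
        = (1/2) * (x i * ∑ j, x j) + (1/2) * (x i * x i) := by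
      intro i
      rw [Finset.sum_add_distrib, Finset.sum_ite_eq' Finset.univ i
        (fun j => (1/2) * (x i * x j))]
      simp [Finset.mul_sum]
    rw [hexp, Finset.sum_congr rfl fun i _ => Finset.sum_congr rfl fun j _ => hsplit i j,
      Finset.sum_congr rfl fun i _ => hss i, Finset.sum_add_distrib, Sfun_eq]
    have e1 : ∑ i, (1/2) * (x i * ∑ j, x j)
        = (1/2) * ((∑ i, x i) * (∑ j, x j)) := by
      rw [← Finset.mul_sum, ← Finset.sum_mul]
    have e2 : ∑ i, (1/2) * (x i * x i) = (1/2) * ∑ i, x i * x i :=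
      (Finset.mul_sum _ _ _).symm
    have e3 : ∑ i, (x i) ^ 2 = ∑ i, x i * x i :=
      Finset.sum_congr rfl fun i _ => _root_.sq (x i)
    rw [e1, e2, e3, _root_.sq]
    ring
  have hLinj : Function.Injective L := by
    rw [← LinearMap.ker_eq_bot, LinearMap.ker_eq_bot']
    intro x hx
    by_contra hne
    have h1 := Sfun_pos hne
    rw [← key, hx, QuadraticMap.map_zero] at h1
    exact lt_irrefl 0 h1
  set W := LinearMap.range L with hWdef
  have hWrank : Module.finrank ℚ W = m := by
    rw [LinearMap.finrank_range_of_inj hLinj, Module.finrank_fin_fun]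
  have hrefl : B.IsRefl := LinearMap.IsSymm.isRefl ⟨QuadraticMap.associated_isSymm ℚ q⟩
  have hrestr : ((LinearMap.BilinForm.restrict B W)).Nondegenerate := by
    suffices hs : ∀ v, (∀ w, (LinearMap.BilinForm.restrict B W) v w = 0) → v = 0 from
      ⟨hs, fun v hv => hs v fun w => hrefl (w : Fin n → ℚ) v (hv w)⟩
    intro v hv
    have h0 : B (v : Fin n → ℚ) (v : Fin n → ℚ) = 0 := hv v
    have hqv : q (v : Fin n → ℚ) = 0 := by rw [← hBdiag]; exact h0
    have hv0 : (v : Fin n → ℚ) = 0 := by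
      by_contra hne
      exact absurd hqv (ne_of_gt (hq _ hne))
    exact Subtype.ext hv0
  have hcompl : IsCompl W (LinearMap.BilinForm.orthogonal B W) :=
    LinearMap.BilinForm.isCompl_orthogonal_of_restrict_nondegenerate hrefl hrestr
  set Wp := LinearMap.BilinForm.orthogonal B W with hWpdef
  let P : (W × Wp) ≃ₗ[ℚ] (Fin n → ℚ) := Submodule.prodEquivOfIsCompl W Wp hcompl
  have hrank : Module.finrank ℚ Wp = n - m := by
    have h1 := P.finrank_eq
    rw [Module.finrank_prod, hWrank, Module.finrank_fin_fun] at h1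
    omega
  let EW : (Fin m → ℚ) ≃ₗ[ℚ] W := LinearEquiv.ofInjective L hLinj
  have hfr : Module.finrank ℚ Wp = Module.finrank ℚ (Fin (n - m) → ℚ) := by
    rw [hrank, Module.finrank_fin_fun]
  let EWp : Wp ≃ₗ[ℚ] (Fin (n - m) → ℚ) := LinearEquiv.ofFinrankEq _ _ hfr
  refine ⟨q.comp (Wp.subtype ∘ₗ (EWp.symm : (Fin (n - m) → ℚ) →ₗ[ℚ] Wp)),
    P.symm.trans (LinearEquiv.prodCongr EW.symm EWp), fun v => ?_⟩
  set a : W := (P.symm v).1 with ha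
  set b : Wp := (P.symm v).2 with hb
  have hv : (a : Fin n → ℚ) + (b : Fin n → ℚ) = v := by
    have h1 := P.apply_symm_apply v
    rw [show P.symm v = (a, b) from rfl] at h1
    simpa [P] using h1
  have horto : B (a : Fin n → ℚ) (b : Fin n → ℚ) = 0 := b.2 (a : Fin n → ℚ) a.2
  have hqv : q v = q (a : Fin n → ℚ) + q (b : Fin n → ℚ) := by
    have hp : polar q (a : Fin n → ℚ) (b : Fin n → ℚ) = 0 := by
      have := hBpolar (a : Fin n → ℚ) (b : Fin n → ℚ)
      rw [horto] at this
      linarith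
    have hdef : polar q (a : Fin n → ℚ) (b : Fin n → ℚ)
        = q ((a : Fin n → ℚ) + b) - q (a : Fin n → ℚ) - q (b : Fin n → ℚ) := rfl
    rw [hp, hv] at hdef
    linarith
  have hT1 : (((P.symm.trans (LinearEquiv.prodCongr EW.symm EWp)) v)).1 = EW.symm a := rfl
  have hT2 : (((P.symm.trans (LinearEquiv.prodCongr EW.symm EWp)) v)).2 = EWp b := rfl
  rw [hT1, hT2]
  have hSa : Sfun m (EW.symm a) = q (a : Fin n → ℚ) := by
    rw [← key]
    congr 1
    have h1 : (EW (EW.symm a) : Fin n → ℚ) = L (EW.symm a) := rfl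
    rw [← h1, EW.apply_symm_apply]
  have hrb : (q.comp (Wp.subtype ∘ₗ (EWp.symm : (Fin (n - m) → ℚ) →ₗ[ℚ] Wp))) (EWp b)
      = q (b : Fin n → ℚ) := by
    rw [QuadraticMap.comp_apply]
    congr 1
    simp
  rw [hSa, hrb, hqv]

/-- The clique number of `G(ℚⁿ, q)` equals `1 + max {k : Sₖ embeds into q}`. -/
theorem stmt_9 {n : ℕ} (q : QuadraticForm ℚ (Fin n → ℚ)) (hq : q.PosDef) :
    (distGraph q).cliqueNum = 1 + sSup {k : ℕ | SEmbeds k q} := by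
  classical
  set A : Set ℕ := {m : ℕ | ∃ s, (distGraph q).IsNClique m s} with hA
  set Bs : Set ℕ := {k : ℕ | SEmbeds k q} with hBs
  have h1A : 1 ∈ A := by
    refine ⟨{0}, ?_, by simp⟩
    intro a ha b hb hab
    simp only [Finset.coe_singleton, Set.mem_singleton_iff] at ha hb
    exact absurd (ha.trans hb.symm) hab
  have hAB : ∀ m, (m + 1) ∈ A → m ∈ Bs := by
    rintro m ⟨s, hs⟩
    exact embeds_of_clique hq hs
  have hBA : ∀ k ∈ Bs, (k + 1) ∈ A := fun k hk => clique_of_embeds hk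
  have hBbd : BddAbove Bs := ⟨n, fun k hk => le_of_embeds hk⟩
  have hAbd : BddAbove A := by
    refine ⟨n + 1, fun m hm => ?_⟩
    match m, hm with
    | 0, _ => omega
    | (m + 1), hm =>
      have := le_of_embeds (hAB m hm)
      omega
  have hBne : Bs.Nonempty := ⟨0, hAB 0 h1A⟩
  have hKmem : sSup Bs ∈ Bs := Nat.sSup_mem hBne hBbd
  have hceq : (distGraph q).cliqueNum = sSup A := rfl
  have hup : (sSup Bs) + 1 ≤ (distGraph q).cliqueNum := by
    rw [hceq]
    exact le_csSup hAbd (hBA _ hKmem)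
  have hdown : (distGraph q).cliqueNum ≤ sSup Bs + 1 := by
    rw [hceq]
    have hmem : sSup A ∈ A := Nat.sSup_mem ⟨1, h1A⟩ hAbd
    cases hsa : sSup A with
    | zero => omega
    | succ m =>
      have hmB : m ∈ Bs := hAB m (hsa ▸ hmem)
      have := le_csSup hBbd hmB
      omega
  omega
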